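/- For the complete graph K_n and a positive semidefinite d×d matrix A, the parameter 𝓔₁(K_n; A) := inf{ ∑_{i} u_iᵀ A u_i : u is a unit-distance representation of K_n in ℝ^d } equals (1/2)·∑_{i=1}^{n−1} λ_i^↑(A) when d ≥ n−1 (where λ_1^↑ ≤ ⋯ ≤ λ_d^↑ are the eigenvalues of A in nondecreasing order), and equals +∞ when d < n−1. -/

import Mathlib

set_option maxHeartbeats 1000000

open scoped RealInnerProductSpace

def IsUnitDistRep {V : Type*} (G : SimpleGraph V) {d : ℕ}
    (u : V → EuclideanSpace ℝ (Fin d)) : Prop :=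
  ∀ i j, G.Adj i j → ‖u i - u j‖ = 1

def IsHypersphereRep {V : Type*} (G : SimpleGraph V) {d : ℕ}
    (u : V → EuclideanSpace ℝ (Fin d)) (t : ℝ) : Prop :=
  IsUnitDistRep G u ∧ ∀ i, ‖u i‖ ^ 2 = t

noncomputable def hypersphereNumber {V : Type*} (G : SimpleGraph V) : ℝ :=
  sInf {t | ∃ (d : ℕ) (u : V → EuclideanSpace ℝ (Fin d)), IsHypersphereRep G u t}

open Matrix

/-- The objective `∑ᵢ uᵢᵀ A uᵢ`. -/
noncomputable def quadSum {n d : ℕ} (A : Matrix (Fin d) (Fin d) ℝ)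
    (u : Fin n → EuclideanSpace ℝ (Fin d)) : ℝ :=
  ∑ i, dotProduct (WithLp.equiv 2 (Fin d → ℝ) (u i))
    (A *ᵥ WithLp.equiv 2 (Fin d → ℝ) (u i))

section Aux


lemma gram {n d : ℕ} (hn : 0 < n) (u : Fin n → EuclideanSpace ℝ (Fin d))
    (hu : ∀ i j : Fin n, i ≠ j → ‖u i - u j‖ = 1) (i j : Fin n) :
    ⟪u i - (n:ℝ)⁻¹ • ∑ k, u k, u j - (n:ℝ)⁻¹ • ∑ k, u k⟫
      = 1/2 * ((if i = j then 1 else 0) - 1/n) := by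
  have hn' : (n:ℝ) ≠ 0 := Nat.cast_ne_zero.mpr hn.ne'
  set S : ℝ := ∑ k, ‖u k‖^2 with hS
  have hq : ∀ a b, ⟪u a, u b⟫ = (‖u a‖^2 + ‖u b‖^2 - 1 + (if a = b then 1 else 0))/2 := by
    intro a b
    by_cases h : a = b
    · subst h; rw [real_inner_self_eq_norm_sq]; simp
    · have h2 : ‖u a - u b‖^2 = 1 := by rw [hu a b h]; norm_num
      rw [norm_sub_sq_real] at h2
      simp only [h, if_false]
      linarith
  have h1 : ∀ a, ∑ k, ⟪u a, u k⟫ = ((n:ℝ) * ‖u a‖^2 + S - n + 1)/2 := by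
    intro a
    simp_rw [hq]
    rw [← Finset.sum_div]
    congr 1
    rw [Finset.sum_add_distrib, Finset.sum_sub_distrib, Finset.sum_add_distrib,
      Finset.sum_const, Finset.sum_ite_eq Finset.univ a (fun _ => (1:ℝ))]
    simp [hS]
  have h2 : ∑ k, ∑ l, ⟪u k, u l⟫ = (n:ℝ) * S - (n^2 - n)/2 := by
    simp_rw [h1]
    rw [← Finset.sum_div, Finset.sum_add_distrib, Finset.sum_sub_distrib,
      Finset.sum_add_distrib, ← Finset.mul_sum, Finset.sum_const]
    simp [hS]
    ring
  have expand : ⟪u i - (n:ℝ)⁻¹ • ∑ k, u k, u j - (n:ℝ)⁻¹ • ∑ k, u k⟫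
      = ⟪u i, u j⟫ - (n:ℝ)⁻¹ * (∑ k, ⟪u i, u k⟫) - (n:ℝ)⁻¹ * (∑ k, ⟪u j, u k⟫)
        + ((n:ℝ)⁻¹ * (n:ℝ)⁻¹) * (∑ k, ∑ l, ⟪u k, u l⟫) := by
    simp only [inner_sub_left, inner_sub_right, real_inner_smul_left, real_inner_smul_right,
      sum_inner, inner_sum]
    have hcomm : ∀ k : Fin n, ⟪u k, u j⟫ = ⟪u j, u k⟫ := fun k => real_inner_comm _ _
    simp_rw [hcomm, ← Finset.mul_sum]
    rw [Finset.sum_comm]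
    ring
  rw [expand, hq i j, h1 i, h1 j, h2]
  by_cases h : i = j <;> simp only [h, if_pos, if_true, if_neg, if_false] <;> field_simp <;> ring


lemma fbound {n d : ℕ} (v : Fin n → EuclideanSpace ℝ (Fin d))
    (gv : ∀ i j, ⟪v i, v j⟫ = 1/2 * ((if i = j then 1 else 0) - 1/n))
    (w : EuclideanSpace ℝ (Fin d)) (hw : ‖w‖ = 1) :
    ∑ i, ⟪v i, w⟫ ^ 2 ≤ 1/2 := by
  rcases Nat.eq_zero_or_pos n with h0 | hn
  · subst h0; simp
  have hn' : (0:ℝ) < n := by exact_mod_cast hn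
  set a : Fin n → ℝ := fun i => ⟪v i, w⟫ with ha
  set f : ℝ := ∑ i, a i ^ 2 with hf
  set m : EuclideanSpace ℝ (Fin d) := ∑ i, a i • v i with hm
  have hmw : ⟪m, w⟫ = f := by
    rw [hm, sum_inner]
    simp_rw [real_inner_smul_left]
    exact Finset.sum_congr rfl fun i _ => by rw [ha]; ring
  have hm2 : ⟪m, m⟫ = 1/2 * (f - (∑ i, a i)^2 / n) := by
    rw [hm, sum_inner]
    simp_rw [inner_sum, real_inner_smul_left, real_inner_smul_right, gv]
    have : ∀ i, ∑ j, a i * (a j * (1/2 * ((if i = j then (1:ℝ) else 0) - 1/n)))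
        = 1/2 * (a i^2 - a i * (∑ j, a j) / n) := by
      intro i
      have : ∀ j, a i * (a j * (1/2 * ((if i = j then (1:ℝ) else 0) - 1/n)))
          = (if i = j then a i * a j / 2 else 0) - a i * a j / (2*n) := by
        intro j
        by_cases h : i = j <;> simp [h] <;> field_simp <;> ring
      simp_rw [this]
      rw [Finset.sum_sub_distrib, Finset.sum_ite_eq Finset.univ i (fun j => a i * a j / 2)]
      simp [← Finset.mul_sum, ← Finset.sum_div]
      field_simp
    simp_rw [this]
    have e0 : ∀ x : Fin n, 1/2 * (a x^2 - (a x * ∑ j, a j)/n)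
        = 1/2 * a x^2 - a x * ((∑ j, a j)/(n*2)) := fun x => by ring
    simp_rw [e0]
    rw [Finset.sum_sub_distrib, ← Finset.mul_sum, ← Finset.sum_mul]
    field_simp
    ring
  have hfnn : 0 ≤ f := Finset.sum_nonneg fun i _ => sq_nonneg _
  have key : f^2 ≤ f/2 := by
    have h1 : f^2 = ⟪m, w⟫^2 := by rw [hmw]
    have h2 : ⟪m, w⟫^2 ≤ ‖m‖^2 * ‖w‖^2 := by
      have := abs_real_inner_le_norm m w
      nlinarith [abs_nonneg (⟪m,w⟫), abs_mul_abs_self (⟪m,w⟫)]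
    have h3 : ‖m‖^2 = ⟪m, m⟫ := (real_inner_self_eq_norm_sq m).symm
    have h4 : ⟪m, m⟫ ≤ f/2 := by
      rw [hm2]
      have : 0 ≤ (∑ i, a i)^2 / n := div_nonneg (sq_nonneg _) hn'.le
      linarith
    rw [h1]
    calc ⟪m,w⟫^2 ≤ ‖m‖^2 * ‖w‖^2 := h2
    _ = ⟪m,m⟫ := by rw [hw, h3]; ring
    _ ≤ f/2 := h4
  rcases hfnn.eq_or_lt with h | h
  · linarith
  · have : f * f ≤ 1/2 * f := by nlinarith [key]
    exact le_of_mul_le_mul_right this h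


lemma sorted_lb {d m : ℕ} (hm : m ≤ d) (s t : Fin d → ℝ) (hs : Monotone s)
    (ht0 : ∀ k, 0 ≤ t k) (ht1 : ∀ k, t k ≤ 1/2) (hsum : ∑ k, t k = m/2) :
    1/2 * ∑ k : Fin d, (if (k:ℕ) < m then s k else 0) ≤ ∑ k, s k * t k := by
  rcases Nat.eq_zero_or_pos m with h0 | hpos
  · subst h0
    have hall : ∀ k ∈ Finset.univ, t k = 0 := by
      intro k _
      have := (Finset.sum_eq_zero_iff_of_nonneg (fun k _ => ht0 k)).mp (by simpa using hsum)
      exact this k (Finset.mem_univ k)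
    simp only [Nat.not_lt_zero, if_false, Finset.sum_const_zero]
    rw [Finset.sum_congr rfl fun k hk => by rw [hall k hk, mul_zero]]
    simp
  · have hd : m - 1 < d := lt_of_lt_of_le (Nat.sub_lt hpos one_pos) hm
    set θ := s ⟨m - 1, hd⟩ with hθ
    have pointwise : ∀ k : Fin d,
        θ * (t k - (if (k:ℕ) < m then 1/2 else 0)) ≤ s k * t k - (if (k:ℕ) < m then s k/2 else 0) := by
      intro k
      by_cases h : (k:ℕ) < m
      · simp only [h, if_true]
        have hsk : s k ≤ θ := hs (by simp [Fin.le_def]; omega)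
        nlinarith [ht1 k]
      · simp only [h, if_false]
        have hsk : θ ≤ s k := hs (by simp [Fin.le_def]; omega)
        nlinarith [ht0 k]
    have hsum2 : ∑ k : Fin d, (if (k:ℕ) < m then (1:ℝ)/2 else 0) = m/2 := by
      rw [Fin.sum_univ_eq_sum_range (fun i => if i < m then (1:ℝ)/2 else 0)]
      rw [← Finset.sum_subset (Finset.range_subset_range.mpr hm)
        (fun x _ hx => by simp [Finset.mem_range] at hx; simp [hx])]
      rw [Finset.sum_congr rfl (fun x hx => if_pos (Finset.mem_range.mp hx))]
      simp
      ring
    have total := Finset.sum_le_sum (fun k (_ : k ∈ Finset.univ) => pointwise k)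
    simp only [mul_sub, Finset.sum_sub_distrib, ← Finset.mul_sum] at total
    have half : ∀ x : Fin d, (if (x:ℕ) < m then s x/2 else 0)
        = 1/2 * (if (x:ℕ) < m then s x else 0) := by intro x; split <;> ring
    simp_rw [half] at total
    rw [← Finset.mul_sum, hsum, hsum2] at total
    linarith


lemma quad_spectral {d : ℕ} (A : Matrix (Fin d) (Fin d) ℝ) (hA : A.IsHermitian)
    (x : EuclideanSpace ℝ (Fin d)) :
    dotProduct (WithLp.equiv 2 (Fin d → ℝ) x) (A *ᵥ WithLp.equiv 2 (Fin d → ℝ) x)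
      = ∑ k, hA.eigenvalues k * ⟪x, hA.eigenvectorBasis k⟫ ^ 2 := by
  have h1 : dotProduct (WithLp.equiv 2 (Fin d → ℝ) x) (A *ᵥ WithLp.equiv 2 (Fin d → ℝ) x)
      = ⟪x, toEuclideanLin A x⟫ := by
    rw [EuclideanSpace.inner_eq_star_dotProduct, toEuclideanLin_apply]
    simp [dotProduct]
    exact Finset.sum_congr rfl fun _ _ => mul_comm _ _
  rw [h1, ← OrthonormalBasis.sum_inner_mul_inner hA.eigenvectorBasis x (toEuclideanLin A x)]
  refine Finset.sum_congr rfl fun k _ => ?_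
  have h2 : toEuclideanLin A (hA.eigenvectorBasis k) = hA.eigenvalues k • hA.eigenvectorBasis k := by
    rw [toEuclideanLin_apply, hA.mulVec_eigenvectorBasis k]
    rw [WithLp.toLp_smul]
  have hsym : ⟪hA.eigenvectorBasis k, toEuclideanLin A x⟫ = ⟪toEuclideanLin A (hA.eigenvectorBasis k), x⟫ :=
    ((isHermitian_iff_isSymmetric.1 hA) (hA.eigenvectorBasis k) x).symm
  rw [hsym, h2, inner_smul_left, real_inner_comm]
  simp [starRingEnd_apply]
  ring

lemma ifsum {d m : ℕ} (hm : m ≤ d) (f : Fin d → ℝ) :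
    ∑ k : Fin d, (if (k:ℕ) < m then f k else 0) = ∑ j : Fin m, f (Fin.castLE hm j) := by
  rcases Nat.eq_zero_or_pos m with h0 | hm0
  · subst h0; simp
  rw [← Finset.sum_filter]
  refine (Finset.sum_nbij' (i := fun j : Fin m => Fin.castLE hm j)
    (j := fun k : Fin d => (⟨(k:ℕ) % m, Nat.mod_lt _ hm0⟩ : Fin m)) ?_ ?_ ?_ ?_ ?_).symm
  · intro a _; simp [Finset.mem_filter, a.isLt]
  · intro a _; exact Finset.mem_univ _
  · intro a _; ext; simp [Nat.mod_eq_of_lt a.isLt]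
  · intro a ha
    have : (a:ℕ) < m := by simpa using (Finset.mem_filter.mp ha).2
    ext; simp [Nat.mod_eq_of_lt this]
  · intro a _; rfl


lemma no_rep {n d : ℕ} (hd : d < n - 1) (u : Fin n → EuclideanSpace ℝ (Fin d))
    (hu : ∀ i j : Fin n, i ≠ j → ‖u i - u j‖ = 1) : False := by
  have hn : 0 < n := by omega
  have hn' : (n:ℝ) ≠ 0 := Nat.cast_ne_zero.mpr hn.ne'
  have hnpos : (0:ℝ) < n := by exact_mod_cast hn
  set c : EuclideanSpace ℝ (Fin d) := (n:ℝ)⁻¹ • ∑ k, u k with hc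
  set v : Fin n → EuclideanSpace ℝ (Fin d) := fun i => u i - c with hv
  have gv : ∀ i j, ⟪v i, v j⟫ = 1/2 * ((if i = j then 1 else 0) - 1/n) :=
    fun i j => gram hn u hu i j
  set vv : Fin (n-1) → EuclideanSpace ℝ (Fin d) := fun j => v (Fin.castLE (Nat.sub_le n 1) j)
    with hvv
  have hli : LinearIndependent ℝ vv := by
    rw [Fintype.linearIndependent_iff]
    intro g hg
    have inner0 : ∀ j0 : Fin (n-1), g j0/2 - (∑ j, g j)/(2*n) = 0 := by
      intro j0
      have h1 : ⟪∑ j, g j • vv j, vv j0⟫ = 0 := by rw [hg, inner_zero_left]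
      rw [sum_inner] at h1
      have h2 : ∀ j : Fin (n-1), ⟪g j • vv j, vv j0⟫
          = (if j = j0 then g j/2 else 0) - g j/(2*n) := by
        intro j
        rw [real_inner_smul_left, hvv]
        simp only []
        rw [gv]
        have hiff : (Fin.castLE (Nat.sub_le n 1) j = Fin.castLE (Nat.sub_le n 1) j0) ↔ (j = j0) :=
          ⟨fun h => Fin.castLE_injective _ h, fun h => by rw [h]⟩
        by_cases h : j = j0
        · simp only [if_pos (hiff.mpr h), if_pos h]; field_simp
        · simp only [if_neg (fun hh => h (hiff.mp hh)), if_neg h]; field_simp; ring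
      rw [Finset.sum_congr rfl (fun j _ => h2 j)] at h1
      rw [Finset.sum_sub_distrib, Finset.sum_ite_eq' Finset.univ j0 (fun j => g j/2)] at h1
      simp only [Finset.mem_univ, if_true] at h1
      rw [← Finset.sum_div] at h1
      linarith [h1]
    have hC : ∑ j, g j = 0 := by
      have hsum := Finset.sum_congr rfl (fun j0 (_ : j0 ∈ (Finset.univ : Finset (Fin (n-1)))) =>
        (sub_eq_zero.mp (inner0 j0) : g j0/2 = (∑ j, g j)/(2*n)))
      rw [← Finset.sum_div, Finset.sum_const, Finset.card_univ, Fintype.card_fin,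
        nsmul_eq_mul] at hsum
      rw [Nat.cast_sub hn] at hsum
      push_cast at hsum
      have h2n : (2:ℝ)*n ≠ 0 := by positivity
      field_simp at hsum
      linarith
    intro j0
    have h3 := inner0 j0
    rw [hC] at h3
    simp at h3
    linarith
  have hcard := hli.fintype_card_le_finrank
  rw [Fintype.card_fin, finrank_euclideanSpace_fin] at hcard
  omega

lemma lower_bound {n d : ℕ} (hm : n - 1 ≤ d) (A : Matrix (Fin d) (Fin d) ℝ)
    (hA : A.PosSemidef) (u : Fin n → EuclideanSpace ℝ (Fin d))
    (hu : ∀ i j : Fin n, i ≠ j → ‖u i - u j‖ = 1) :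
    1/2 * ∑ k : Fin d, (if (k:ℕ) < n - 1 then
        hA.isHermitian.eigenvalues (Tuple.sort hA.isHermitian.eigenvalues k) else 0)
      ≤ ∑ i, dotProduct (WithLp.equiv 2 (Fin d → ℝ) (u i))
          (A *ᵥ WithLp.equiv 2 (Fin d → ℝ) (u i)) := by
  set μ := hA.isHermitian.eigenvalues with hμ
  set σ := Tuple.sort μ with hσ
  set e := hA.isHermitian.eigenvectorBasis with he
  have hquad : ∑ i, dotProduct (WithLp.equiv 2 (Fin d → ℝ) (u i))
      (A *ᵥ WithLp.equiv 2 (Fin d → ℝ) (u i)) = ∑ k, μ k * (∑ i, ⟪u i, e k⟫^2) := by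
    simp_rw [quad_spectral A hA.isHermitian]
    rw [Finset.sum_comm]
    simp_rw [Finset.mul_sum]
    rfl
  rcases Nat.eq_zero_or_pos n with h0 | hn
  · subst h0
    have : (0:ℕ) - 1 = 0 := rfl
    simp only [this, Nat.not_lt_zero, if_false, Finset.sum_const_zero, mul_zero]
    rw [hquad]
    refine Finset.sum_nonneg fun k _ => mul_nonneg (hA.eigenvalues_nonneg k)
      (Finset.sum_nonneg fun i _ => sq_nonneg _)
  · have hn' : (n:ℝ) ≠ 0 := Nat.cast_ne_zero.mpr hn.ne'
    set c : EuclideanSpace ℝ (Fin d) := (n:ℝ)⁻¹ • ∑ k, u k with hc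
    set v : Fin n → EuclideanSpace ℝ (Fin d) := fun i => u i - c with hv
    have gv : ∀ i j, ⟪v i, v j⟫ = 1/2 * ((if i = j then 1 else 0) - 1/n) :=
      fun i j => gram hn u hu i j
    have hvsum : ∑ i, v i = 0 := by
      rw [hv]
      simp only [Finset.sum_sub_distrib, Finset.sum_const, Finset.card_univ, Fintype.card_fin, hc]
      rw [sub_eq_zero, ← Nat.cast_smul_eq_nsmul ℝ, smul_smul]
      rw [mul_inv_cancel₀ hn', one_smul]
    set t : Fin d → ℝ := fun k => ∑ i, ⟪v i, e k⟫^2 with ht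
    have ht0 : ∀ k, 0 ≤ t k := fun k => Finset.sum_nonneg fun i _ => sq_nonneg _
    have ht1 : ∀ k, t k ≤ 1/2 := fun k => fbound v gv (e k) (e.orthonormal.1 k)
    have htsum : ∑ k, t k = ((n-1 : ℕ) : ℝ)/2 := by
      rw [ht]
      rw [Finset.sum_comm]
      have par : ∀ i, ∑ k, ⟪v i, e k⟫^2 = ⟪v i, v i⟫ := by
        intro i
        have := e.sum_inner_mul_inner (v i) (v i)
        calc ∑ k, ⟪v i, e k⟫^2 = ∑ k, ⟪v i, e k⟫ * ⟪e k, v i⟫ := by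
              refine Finset.sum_congr rfl fun k _ => ?_
              rw [real_inner_comm (e k) (v i)]; ring
          _ = ⟪v i, v i⟫ := this
      simp_rw [par, gv]
      simp only [if_pos, if_true, Finset.sum_const, Finset.card_univ, Fintype.card_fin,
        nsmul_eq_mul]
      rw [Nat.cast_sub hn]
      field_simp
      ring
    have key := sorted_lb hm (fun k => μ (σ k)) (fun k => t (σ k))
      (Tuple.monotone_sort μ) (fun k => ht0 _) (fun k => ht1 _)
      (by rw [Equiv.sum_comp σ t, htsum])
    have reidx : ∑ k, μ (σ k) * t (σ k) = ∑ k, μ k * t k :=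
      Equiv.sum_comp σ (fun k => μ k * t k)
    rw [hquad]
    have hTt : ∀ k, μ k * t k ≤ μ k * (∑ i, ⟪u i, e k⟫^2) := by
      intro k
      refine mul_le_mul_of_nonneg_left ?_ (hA.eigenvalues_nonneg k)
      have expand : ∀ i, ⟪u i, e k⟫ = ⟪v i, e k⟫ + ⟪c, e k⟫ := by
        intro i
        rw [hv]
        simp only [sub_add_cancel]
        rw [inner_sub_left]
        ring
      have hzero : ∑ i, ⟪v i, e k⟫ = 0 := by
        rw [← sum_inner, hvsum, inner_zero_left]
      have expand2 : ∑ i, (⟪v i, e k⟫ + ⟪c, e k⟫)^2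
          = ∑ i, ⟪v i, e k⟫^2 + (n:ℝ) * ⟪c, e k⟫^2 := by
        have sq : ∀ i : Fin n, (⟪v i, e k⟫ + ⟪c, e k⟫)^2
            = ⟪v i, e k⟫^2 + 2*⟪c, e k⟫*⟪v i, e k⟫ + ⟪c, e k⟫^2 := fun i => by ring
        simp_rw [sq]
        rw [Finset.sum_add_distrib, Finset.sum_add_distrib, ← Finset.mul_sum, hzero,
          Finset.sum_const, Finset.card_univ, Fintype.card_fin, nsmul_eq_mul]
        ring
      calc t k = ∑ i, ⟪v i, e k⟫^2 := rfl
        _ ≤ ∑ i, ⟪v i, e k⟫^2 + ((n:ℝ) * ⟪c, e k⟫^2) := le_add_of_nonneg_right (by positivity)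
        _ = ∑ i, (⟪v i, e k⟫ + ⟪c, e k⟫)^2 := expand2.symm
        _ = ∑ i, ⟪u i, e k⟫^2 := by simp_rw [← expand]
    calc 1/2 * ∑ k : Fin d, (if (k:ℕ) < n - 1 then μ (σ k) else 0)
        ≤ ∑ k, μ (σ k) * t (σ k) := key
      _ = ∑ k, μ k * t k := reidx
      _ ≤ ∑ k, μ k * (∑ i, ⟪u i, e k⟫^2) := Finset.sum_le_sum fun k _ => hTt k

lemma exists_rep {n d : ℕ} (hm : n - 1 ≤ d) (A : Matrix (Fin d) (Fin d) ℝ)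
    (hA : A.IsHermitian) :
    ∃ u : Fin n → EuclideanSpace ℝ (Fin d),
      (∀ i j : Fin n, i ≠ j → ‖u i - u j‖ = 1) ∧
      ∑ i, dotProduct (WithLp.equiv 2 (Fin d → ℝ) (u i))
          (A *ᵥ WithLp.equiv 2 (Fin d → ℝ) (u i))
        = 1/2 * ∑ k : Fin d, (if (k:ℕ) < n - 1 then
            hA.eigenvalues (Tuple.sort hA.eigenvalues k) else 0) := by
  rcases Nat.eq_zero_or_pos n with h0 | hn
  · subst h0
    refine ⟨fun _ => 0, fun i => i.elim0, ?_⟩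
    simp
  have hn' : (n:ℝ) ≠ 0 := Nat.cast_ne_zero.mpr hn.ne'
  set μ := hA.eigenvalues with hμ
  set σ := Tuple.sort μ with hσ
  set e := hA.eigenvectorBasis with he
  -- the all-ones vector
  set o : EuclideanSpace ℝ (Fin n) := (WithLp.equiv 2 (Fin n → ℝ)).symm (fun _ => 1) with ho
  have hoapp : ∀ i : Fin n, o i = 1 := fun i => rfl
  have hsingle : ∀ (i : Fin n) (x : EuclideanSpace ℝ (Fin n)),
      ⟪EuclideanSpace.single i (1:ℝ), x⟫ = x i := by
    intro i x
    rw [EuclideanSpace.inner_single_left]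
    simp
  have hoo : ⟪o, o⟫ = (n:ℝ) := by
    rw [PiLp.inner_apply]
    simp [hoapp]
  have hso : ∀ i : Fin n, ⟪EuclideanSpace.single i (1:ℝ), o⟫ = 1 := fun i => by
    rw [hsingle]; exact hoapp i
  have hos : ∀ i : Fin n, ⟪o, EuclideanSpace.single i (1:ℝ)⟫ = 1 := fun i => by
    rw [real_inner_comm]; exact hso i
  set w : Fin n → EuclideanSpace ℝ (Fin n) :=
    fun i => (Real.sqrt 2)⁻¹ • (EuclideanSpace.single i 1 - (n:ℝ)⁻¹ • o) with hw
  have hsq2 : (Real.sqrt 2)⁻¹ * (Real.sqrt 2)⁻¹ = 1/2 := by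
    rw [← mul_inv]
    rw [Real.mul_self_sqrt (by norm_num)]
    norm_num
  have hss : ∀ i j : Fin n, ⟪EuclideanSpace.single i (1:ℝ), EuclideanSpace.single j (1:ℝ)⟫
      = (if i = j then 1 else 0) := by
    intro i j
    rw [hsingle]
    rw [EuclideanSpace.single_apply]
  have gw : ∀ i j : Fin n, ⟪w i, w j⟫ = 1/2 * ((if i = j then 1 else 0) - 1/n) := by
    intro i j
    rw [hw]
    simp only [real_inner_smul_left, real_inner_smul_right, inner_sub_left, inner_sub_right,
      hss, hso, hos, hoo]
    rw [inv_mul_cancel₀ hn']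
    linear_combination ((if i = j then (1:ℝ) else 0) - 1/(n:ℝ)) * hsq2
  have ho0 : o ≠ 0 := by
    intro h
    have : o ⟨0, hn⟩ = 0 := by rw [h]; rfl
    rw [hoapp] at this
    norm_num at this
  have hwo : ∀ i, ⟪o, w i⟫ = 0 := by
    intro i
    rw [hw]
    simp only [real_inner_smul_right, inner_sub_right, hos, hoo]
    field_simp
    ring
  set S := (Submodule.span ℝ {o})ᗮ with hS
  have hwmem : ∀ i, w i ∈ S :=
    fun i => Submodule.mem_orthogonal_singleton_iff_inner_right.mpr (hwo i)
  have hrank : Module.finrank ℝ S = n - 1 := by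
    have h1 : Module.finrank ℝ (Submodule.span ℝ {o}) = 1 := finrank_span_singleton ho0
    have h2 := Submodule.finrank_add_finrank_orthogonal (K := Submodule.span ℝ {o})
    rw [h1, finrank_euclideanSpace_fin] at h2
    rw [hS]
    omega
  set g : OrthonormalBasis (Fin (n-1)) ℝ S :=
    (stdOrthonormalBasis ℝ S).reindex (finCongr (by rw [hrank])) with hg
  have hgo : ∀ p, ⟪o, ((g p : EuclideanSpace ℝ (Fin n)))⟫ = 0 := by
    intro p
    exact Submodule.mem_orthogonal_singleton_iff_inner_right.mp (g p).2
  set ψ : Fin (n-1) → Fin d := fun p => σ (Fin.castLE hm p) with hψ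
  have hψinj : Function.Injective ψ := fun p q h => Fin.castLE_injective hm (σ.injective h)
  set a : Fin n → Fin (n-1) → ℝ := fun i p => ⟪w i, ((g p : EuclideanSpace ℝ (Fin n)))⟫ with ha
  set u : Fin n → EuclideanSpace ℝ (Fin d) := fun i => ∑ p, a i p • e (ψ p) with hu
  have hee : ∀ p q : Fin d, ⟪e p, e q⟫ = if p = q then 1 else 0 :=
    fun p q => orthonormal_iff_ite.mp e.orthonormal p q
  have hgram : ∀ i j, ⟪u i, u j⟫ = ⟪w i, w j⟫ := by
    intro i j
    rw [hu]
    simp only [sum_inner, inner_sum, real_inner_smul_left, real_inner_smul_right, hee]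
    have hterm : ∀ p q : Fin (n-1), a j p * (a i q * (if ψ q = ψ p then (1:ℝ) else 0))
        = if q = p then a i q * a j q else 0 := by
      intro p q
      by_cases h : q = p
      · subst h; simp [mul_comm]
      · rw [if_neg (fun hh => h (hψinj hh)), if_neg h]; ring
    rw [Finset.sum_congr rfl fun p _ => Finset.sum_congr rfl fun q _ => hterm p q]
    rw [Finset.sum_congr rfl fun p (_ : p ∈ Finset.univ) =>
      Finset.sum_ite_eq' Finset.univ p (fun q => a i q * a j q)]
    simp only [Finset.mem_univ, if_true]
    -- now ∑ p, a i p * a j p = ⟪w i, w j⟫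
    have hwi : (⟨w i, hwmem i⟩ : S) = ⟨w i, hwmem i⟩ := rfl
    have key := g.sum_inner_mul_inner (⟨w i, hwmem i⟩ : S) (⟨w j, hwmem j⟩ : S)
    have hc : ∀ p, (⟪(⟨w i, hwmem i⟩ : S), g p⟫ : ℝ) = a i p := fun p => rfl
    have hc2 : ∀ p, (⟪g p, (⟨w j, hwmem j⟩ : S)⟫ : ℝ) = a j p := fun p => by
      rw [real_inner_comm]; rfl
    have hc3 : (⟪(⟨w i, hwmem i⟩ : S), (⟨w j, hwmem j⟩ : S)⟫ : ℝ) = ⟪w i, w j⟫ := rfl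
    rw [Finset.sum_congr rfl (fun p _ => by rw [← hc p, ← hc2 p]), key, hc3]
  refine ⟨u, ?_, ?_⟩
  · intro i j hij
    have h2 : ‖u i - u j‖^2 = 1 := by
      rw [← real_inner_self_eq_norm_sq]
      rw [inner_sub_sub_self]
      simp only [hgram, gw]
      simp only [if_true, if_neg hij, if_neg (show ¬ j = i from fun h => hij h.symm)]
      field_simp
      ring
    nlinarith [norm_nonneg (u i - u j), h2]
  · simp_rw [quad_spectral A hA]
    have hinner : ∀ (i : Fin n) (k : Fin d), ⟪u i, e k⟫ = ∑ p, a i p * (if ψ p = k then 1 else 0) := by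
      intro i k
      rw [hu]
      simp only [sum_inner, real_inner_smul_left, hee]
    have hinner2 : ∀ (i : Fin n) (p : Fin (n-1)), ⟪u i, e (ψ p)⟫ = a i p := by
      intro i p
      rw [hinner]
      rw [Finset.sum_congr rfl fun q (_ : q ∈ Finset.univ) =>
        (show a i q * (if ψ q = ψ p then (1:ℝ) else 0) = if q = p then a i q else 0 from by
          by_cases h : q = p
          · rw [if_pos (by rw [h]), if_pos h, mul_one]
          · rw [if_neg (fun hh => h (hψinj hh)), if_neg h, mul_zero])]
      rw [Finset.sum_ite_eq' Finset.univ p (fun q => a i q)]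
      simp
    have hfix : ∀ i : Fin n, ∑ k, μ k * ⟪u i, e k⟫^2 = ∑ p, μ (ψ p) * a i p^2 := by
      intro i
      rw [← Finset.sum_subset (Finset.subset_univ (Finset.univ.image ψ))
        (fun k _ hk => ?_)]
      · rw [Finset.sum_image (fun p _ q _ h => hψinj h)]
        exact Finset.sum_congr rfl fun p _ => by rw [hinner2]
      · rw [hinner]
        have : ∀ p : Fin (n-1), a i p * (if ψ p = k then (1:ℝ) else 0) = 0 := by
          intro p
          rw [if_neg, mul_zero]
          intro h
          exact hk (Finset.mem_image.mpr ⟨p, Finset.mem_univ p, h⟩)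
        rw [Finset.sum_congr rfl fun p _ => this p]
        simp
    rw [Finset.sum_congr rfl fun i (_ : i ∈ Finset.univ) => hfix i]
    rw [Finset.sum_comm]
    have hone : ∀ p : Fin (n-1), ∑ i, a i p^2 = 1/2 := by
      intro p
      have hap : ∀ i, a i p = (Real.sqrt 2)⁻¹ * ((g p : EuclideanSpace ℝ (Fin n)) i) := by
        intro i
        rw [ha]
        simp only [hw]
        rw [real_inner_smul_left, inner_sub_left, hsingle, real_inner_smul_left, hgo]
        ring
      simp_rw [hap]
      have hterm1 : ∀ i : Fin n, ((Real.sqrt 2)⁻¹ * ((g p : EuclideanSpace ℝ (Fin n)) i))^2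
          = 1/2 * (((g p : EuclideanSpace ℝ (Fin n)) i) * ((g p : EuclideanSpace ℝ (Fin n)) i)) := by
        intro i
        rw [mul_pow, sq, sq, hsq2]
      simp_rw [hterm1]
      rw [← Finset.mul_sum]
      have hinnergp : ∑ i, ((g p : EuclideanSpace ℝ (Fin n)) i) * ((g p : EuclideanSpace ℝ (Fin n)) i)
          = ⟪(g p : EuclideanSpace ℝ (Fin n)), (g p : EuclideanSpace ℝ (Fin n))⟫ := by
        rw [PiLp.inner_apply]
        simp
        exact Finset.sum_congr rfl fun _ _ => (sq _).symm
      rw [hinnergp, real_inner_self_eq_norm_sq]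
      have hng : ‖(g p : EuclideanSpace ℝ (Fin n))‖ = 1 := by
        have := g.orthonormal.1 p
        exact this
      rw [hng]
      norm_num
    have hcollect : ∀ p : Fin (n-1), ∑ i, μ (ψ p) * a i p^2 = μ (ψ p) * (1/2) := by
      intro p
      rw [← Finset.mul_sum, hone p]
    rw [Finset.sum_congr rfl fun p (_ : p ∈ Finset.univ) => hcollect p]
    rw [ifsum hm (fun k => μ (σ k))]
    rw [Finset.mul_sum]
    refine Finset.sum_congr rfl fun p _ => by ring

end Aux

/-- `𝓔₁(Kₙ; A) = (1/2) ∑_{i=1}^{n−1} λ_i^↑(A)` when `d ≥ n − 1`, and `+∞`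
(no unit-distance representation exists) when `d < n − 1`. -/
theorem ellipsoid_one_completeGraph (n d : ℕ) (A : Matrix (Fin d) (Fin d) ℝ)
    (hA : A.PosSemidef) :
    (n - 1 ≤ d →
      sInf {r : ℝ | ∃ u : Fin n → EuclideanSpace ℝ (Fin d),
          IsUnitDistRep (SimpleGraph.completeGraph (Fin n)) u ∧ r = quadSum A u}
        = 1 / 2 * ∑ i : Fin d, if (i : ℕ) < n - 1 then
            hA.isHermitian.eigenvalues (Tuple.sort hA.isHermitian.eigenvalues i) else 0) ∧
    (d < n - 1 → ∀ u : Fin n → EuclideanSpace ℝ (Fin d),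
      ¬ IsUnitDistRep (SimpleGraph.completeGraph (Fin n)) u) := by
  have htrans : ∀ (u : Fin n → EuclideanSpace ℝ (Fin d)),
      IsUnitDistRep (SimpleGraph.completeGraph (Fin n)) u ↔ (∀ i j : Fin n, i ≠ j → ‖u i - u j‖ = 1) := by
    intro u
    constructor
    · intro h i j hij
      exact h i j (by simpa using hij)
    · intro h i j hij
      exact h i j (by simpa using hij)
  constructor
  · intro hmle
    obtain ⟨u0, hu0, hq0⟩ := exists_rep hmle A hA.isHermitian
    have hmem : quadSum A u0 ∈ {r : ℝ | ∃ u : Fin n → EuclideanSpace ℝ (Fin d),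
        IsUnitDistRep (SimpleGraph.completeGraph (Fin n)) u ∧ r = quadSum A u} :=
      ⟨u0, (htrans u0).mpr hu0, rfl⟩
    have hlb : ∀ r ∈ {r : ℝ | ∃ u : Fin n → EuclideanSpace ℝ (Fin d),
        IsUnitDistRep (SimpleGraph.completeGraph (Fin n)) u ∧ r = quadSum A u},
        1 / 2 * ∑ i : Fin d, (if (i : ℕ) < n - 1 then
          hA.isHermitian.eigenvalues (Tuple.sort hA.isHermitian.eigenvalues i) else 0) ≤ r := by
      rintro r ⟨u, hu, rfl⟩
      exact lower_bound hmle A hA u ((htrans u).mp hu)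
    refine le_antisymm (csInf_le ⟨_, hlb⟩ hmem |>.trans_eq ?_) (le_csInf ⟨_, hmem⟩ hlb)
    exact hq0
  · intro hdlt u hu
    exact no_rep hdlt u ((htrans u).mp hu)
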